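/- arXiv:1803.09192 — 4 statements merged into one kernel-verified Lean document; each statement's English description precedes it below -/
import Mathlib

section
/- Let H be a finite-dimensional real inner product space, A self-adjoint with orthonormal eigenvectors u_1,...,u_N spanning M (eigenvalues λ_1,...,λ_N), and suppose μ, ν ∈ ℝ with μ ≠ λ_j for all j. If û = (ν - μ)(A - μI)^{-1} u for some unit vector u ∈ H, and E denotes orthogonal projection onto M, then ‖û‖ ≥ (1 - max_j |ν - λ_j|/|λ_j - μ|) · ‖Eu‖, provided max_j |ν - λ_j|/|λ_j - μ| ≤ 1. -/
open RealInnerProductSpace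

theorem stmt_4 {H : Type*} [NormedAddCommGroup H] [InnerProductSpace ℝ H]
    [FiniteDimensional ℝ H]
    (A : H →ₗ[ℝ] H) (hA : ∀ x y, ⟪A x, y⟫ = ⟪x, A y⟫)
    (N : ℕ) (hN : 0 < N) (uu : Fin N → H) (lam : Fin N → ℝ)
    (h_orth : Orthonormal ℝ uu)
    (h_eig : ∀ j, A (uu j) = lam j • uu j)
    (μ ν : ℝ) (hμ : ∀ j, lam j ≠ μ)
    (hμ' : ¬ Module.End.HasEigenvalue A μ)
    (E : H →ₗ[ℝ] H)
    (hE_mem : ∀ w, E w ∈ Submodule.span ℝ (Set.range uu))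
    (hE_orth : ∀ w, ∀ m ∈ Submodule.span ℝ (Set.range uu), ⟪w - E w, m⟫ = 0)
    (u uhat : H) (hu : ‖u‖ = 1)
    (huhat : (A - μ • (LinearMap.id : H →ₗ[ℝ] H)) uhat = (ν - μ) • u) :
    haveI : Nonempty (Fin N) := Fin.pos_iff_nonempty.mp hN
    (Finset.univ.sup' Finset.univ_nonempty fun j => |ν - lam j| / |lam j - μ|) ≤ 1 →
    (1 - Finset.univ.sup' Finset.univ_nonempty fun j => |ν - lam j| / |lam j - μ|) * ‖E u‖
      ≤ ‖uhat‖ := by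
  haveI : Nonempty (Fin N) := Fin.pos_iff_nonempty.mp hN
  intro hρ1
  set ρ := Finset.univ.sup' Finset.univ_nonempty fun j => |ν - lam j| / |lam j - μ| with hρdef
  have hρj : ∀ j : Fin N, |ν - lam j| / |lam j - μ| ≤ ρ := by
    intro j; rw [hρdef]; exact Finset.le_sup' (fun j => |ν - lam j| / |lam j - μ|) (Finset.mem_univ j)
  have hρ0 : 0 ≤ ρ := by
    have h1 := hρj ⟨0, hN⟩
    have h0 : (0:ℝ) ≤ |ν - lam ⟨0, hN⟩| / |lam ⟨0, hN⟩ - μ| :=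
      div_nonneg (abs_nonneg _) (abs_nonneg _)
    linarith
  set c : Fin N → ℝ := fun j => ⟪uu j, u⟫ with hc
  set d : Fin N → ℝ := fun j => ⟪uu j, uhat⟫ with hd
  -- relation between coefficients
  have hrel : ∀ j, (lam j - μ) * d j = (ν - μ) * c j := by
    intro j
    have h1 : ⟪(A - μ • (LinearMap.id : H →ₗ[ℝ] H)) uhat, uu j⟫ = (ν - μ) * c j := by
      rw [huhat, real_inner_smul_left, real_inner_comm]
    have h2 : ⟪(A - μ • (LinearMap.id : H →ₗ[ℝ] H)) uhat, uu j⟫ = (lam j - μ) * d j := by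
      simp only [LinearMap.sub_apply, LinearMap.smul_apply, LinearMap.id_apply]
      rw [inner_sub_left, hA, h_eig, real_inner_smul_right, real_inner_smul_left,
        real_inner_comm]
      ring
    rw [← h2, h1]
  -- a vector in the span orthogonal to all uu j is zero
  have hzero : ∀ m ∈ Submodule.span ℝ (Set.range uu), (∀ j, ⟪uu j, m⟫ = 0) → m = 0 := by
    intro m hm h0
    have key : ∀ x ∈ Submodule.span ℝ (Set.range uu), ⟪x, m⟫ = 0 := by
      intro x hx
      induction hx using Submodule.span_induction with
      | mem x hx => obtain ⟨j, rfl⟩ := hx; exact h0 j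
      | zero => simp
      | add x y _ _ hx hy => rw [inner_add_left, hx, hy]; ring
      | smul r x _ hx => rw [real_inner_smul_left, hx]; ring
    exact inner_self_eq_zero.mp (key m hm)
  set Pu : H := ∑ j, c j • uu j with hPu
  set Pv : H := ∑ j, d j • uu j with hPv
  have hmem : ∀ l : Fin N → ℝ, (∑ j, l j • uu j) ∈ Submodule.span ℝ (Set.range uu) :=
    fun l => Submodule.sum_mem _ fun j _ =>
      Submodule.smul_mem _ _ (Submodule.subset_span ⟨j, rfl⟩)
  -- E u = Pu
  have hEu : E u = Pu := by
    have h0 : ∀ j, ⟪uu j, E u - Pu⟫ = 0 := by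
      intro j
      have h1 : ⟪u, uu j⟫ - ⟪E u, uu j⟫ = 0 := by
        have := hE_orth u (uu j) (Submodule.subset_span ⟨j, rfl⟩)
        rwa [inner_sub_left] at this
      have h2 : ⟪uu j, Pu⟫ = c j := h_orth.inner_right_fintype c j
      have h3 : ⟪uu j, E u⟫ = ⟪E u, uu j⟫ := real_inner_comm _ _
      have h4 : c j = ⟪u, uu j⟫ := real_inner_comm _ _
      rw [inner_sub_right, h2]
      linarith
    have := hzero (E u - Pu) (Submodule.sub_mem _ (hE_mem u) (hmem c)) h0
    rwa [sub_eq_zero] at this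
  -- ‖Pv‖ ≤ ‖uhat‖
  have horth : ⟪uhat - Pv, Pv⟫ = 0 := by
    rw [hPv, inner_sum]
    refine Finset.sum_eq_zero fun j _ => ?_
    rw [real_inner_smul_right, inner_sub_left]
    have e2 : (⟪∑ k, d k • uu k, uu j⟫ : ℝ) = d j := by
      rw [real_inner_comm]; exact h_orth.inner_right_fintype d j
    have e3 : (⟪uhat, uu j⟫ : ℝ) = d j := real_inner_comm _ _
    rw [e2, e3, sub_self, mul_zero]
  have hPv_le : ‖Pv‖ ≤ ‖uhat‖ := by
    have hsq : ‖uhat‖ ^ 2 = ‖uhat - Pv‖ ^ 2 + 2 * ⟪uhat - Pv, Pv⟫ + ‖Pv‖ ^ 2 := by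
      have := norm_add_sq_real (uhat - Pv) Pv
      simp only [sub_add_cancel] at this
      linarith [this]
    rw [horth] at hsq
    nlinarith [norm_nonneg uhat, norm_nonneg Pv, sq_nonneg ‖uhat - Pv‖]
  -- norms of linear combinations
  have hnorm : ∀ l : Fin N → ℝ, ‖(∑ j, l j • uu j)‖ ^ 2 = ∑ j, l j ^ 2 := by
    intro l
    have := h_orth.inner_sum l l Finset.univ
    simp only [RCLike.star_def, starRingEnd_apply, star_trivial] at this
    rw [← real_inner_self_eq_norm_sq]
    rw [this]
    exact Finset.sum_congr rfl fun j _ => (sq (l j)).symm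
  -- coefficient bound
  have hcoef : ∀ j, (d j - c j) ^ 2 ≤ ρ ^ 2 * c j ^ 2 := by
    intro j
    have hne : lam j - μ ≠ 0 := sub_ne_zero.mpr (hμ j)
    have h1 : (lam j - μ) * (d j - c j) = (ν - lam j) * c j := by
      have := hrel j; ring_nf; ring_nf at this; linarith
    have h2 : |d j - c j| = |ν - lam j| / |lam j - μ| * |c j| := by
      rw [div_mul_eq_mul_div, eq_div_iff (abs_ne_zero.mpr hne), mul_comm |d j - c j|,
        ← abs_mul, ← abs_mul, h1]
    have h3 : |d j - c j| ≤ ρ * |c j| := by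
      rw [h2]
      exact mul_le_mul_of_nonneg_right (hρj j) (abs_nonneg _)
    calc (d j - c j) ^ 2 = |d j - c j| ^ 2 := (sq_abs _).symm
      _ ≤ (ρ * |c j|) ^ 2 := by
          exact pow_le_pow_left₀ (abs_nonneg _) h3 2
      _ = ρ ^ 2 * c j ^ 2 := by rw [mul_pow, sq_abs]
  -- ‖Pv - Pu‖ ≤ ρ * ‖Pu‖
  have hsub : Pv - Pu = ∑ j, (d j - c j) • uu j := by
    rw [hPv, hPu, ← Finset.sum_sub_distrib]
    exact Finset.sum_congr rfl fun j _ => (sub_smul _ _ _).symm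
  have hdiff : ‖Pv - Pu‖ ≤ ρ * ‖Pu‖ := by
    have h1 : ‖Pv - Pu‖ ^ 2 ≤ (ρ * ‖Pu‖) ^ 2 := by
      rw [hsub, hnorm, mul_pow, hnorm c]
      calc ∑ j, (d j - c j) ^ 2 ≤ ∑ j, ρ ^ 2 * c j ^ 2 :=
            Finset.sum_le_sum fun j _ => hcoef j
        _ = ρ ^ 2 * ∑ j, c j ^ 2 := by rw [Finset.mul_sum]
    nlinarith [norm_nonneg (Pv - Pu), mul_nonneg hρ0 (norm_nonneg Pu)]
  -- conclude
  have htri : ‖Pu‖ ≤ ‖Pv‖ + ‖Pu - Pv‖ := norm_le_insert' _ _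
  rw [← norm_neg (Pu - Pv), neg_sub] at htri
  rw [hEu]
  nlinarith [norm_nonneg Pu]
end

section
/- Let H be a real inner product space with symmetric bilinear forms a and b, where a(u,u) = λ b(u,u) with b(u,u)=1 for an exact eigenpair (λ, u) satisfying a(u,v) = λ b(u,v) for all v, and let (λ_h, u_h) satisfy a_w(u_h, u_h) = λ_h with b_w(u_h,u_h) = 1 in a discrete space. Then for any v in the discrete space, the identity λ - λ_h = ‖Δu - Δ_w u_h‖² + s(u_h - v, u_h - v) - λ_h ‖u_0 - v_0‖² - λ_h(‖u_0‖² - ‖v_0‖²) + 2(Δu - Δ_w v, Δ_w u_h) - s(v,v) holds, where a_w(w,z) = (Δ_w w, Δ_w z) + s(w,z) and b_w(w,z) = (w_0, z_0). -/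
open RealInnerProductSpace

theorem stmt_13 {H₀ : Type*} [NormedAddCommGroup H₀] [InnerProductSpace ℝ H₀]
    {Vh : Type*} [AddCommGroup Vh] [Module ℝ Vh]
    (Δu : H₀) (Δw P0 : Vh →ₗ[ℝ] H₀)
    (s : LinearMap.BilinForm ℝ Vh) (hs_symm : ∀ x y, s x y = s y x)
    (lam lamh : ℝ) (uh v : Vh)
    (hlam : ⟪Δu, Δu⟫ = lam)
    (hnorm : ⟪P0 uh, P0 uh⟫ = 1)
    (heig : ∀ z : Vh, ⟪Δw uh, Δw z⟫ + s uh z = lamh * ⟪P0 uh, P0 z⟫) :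
    lam - lamh
      = ⟪Δu - Δw uh, Δu - Δw uh⟫ + s (uh - v) (uh - v)
        - lamh * ⟪P0 uh - P0 v, P0 uh - P0 v⟫
        - lamh * (⟪P0 uh, P0 uh⟫ - ⟪P0 v, P0 v⟫)
        + 2 * ⟪Δu - Δw v, Δw uh⟫ - s v v := by
  have h1 := heig uh
  have h2 := heig v
  have hsv := hs_symm v uh
  have hcomm : ⟪Δw uh, Δw v⟫ = ⟪Δw v, Δw uh⟫ := real_inner_comm _ _
  have hpc : ⟪P0 uh, P0 v⟫ = ⟪P0 v, P0 uh⟫ := real_inner_comm _ _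
  have hd : ⟪Δw uh, Δu⟫ = ⟪Δu, Δw uh⟫ := real_inner_comm _ _
  simp only [inner_sub_left, inner_sub_right, map_sub, LinearMap.sub_apply,
    LinearMap.map_sub₂] at *
  simp only [hd, hsv, hcomm, hpc] at *
  linear_combination -hlam - h1 + 2 * h2 + lamh * hnorm
end

section
/- Let H be a finite-dimensional real vector space with two symmetric positive-definite bilinear forms a_w and b_w such that b_w(v,v) ≤ C² a_w(v,v) for all v ∈ H (discrete Poincaré). Let M ⊆ H be a subspace and μ ∈ ℝ such that a_w(v,v) - μ b_w(v,v) ≥ C_ρ a_w(v,v) for all v in the b_w-orthogonal complement M^⊥ of M, with C_ρ > 0. If v̂ ∈ M^⊥ satisfies a_w(v̂, z) - μ b_w(v̂, z) = β b_w(g, z) for all z ∈ M^⊥ for some g ∈ H and β ∈ ℝ, then √(a_w(v̂,v̂)) ≤ C_ρ^{-1} C |β| √(b_w(g,g)). -/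
theorem stmt_17 {H : Type*} [AddCommGroup H] [Module ℝ H] [FiniteDimensional ℝ H]
    (aw bw : LinearMap.BilinForm ℝ H)
    (haw_symm : ∀ v w, aw v w = aw w v) (hbw_symm : ∀ v w, bw v w = bw w v)
    (haw_pos : ∀ v, v ≠ 0 → 0 < aw v v) (hbw_pos : ∀ v, v ≠ 0 → 0 < bw v v)
    (C : ℝ) (hC : 0 < C) (hPoincare : ∀ v, bw v v ≤ C^2 * aw v v)
    (M : Submodule ℝ H) (μ Cρ : ℝ) (hCρ : 0 < Cρ)
    (hcoer : ∀ v, (∀ m ∈ M, bw v m = 0) → Cρ * aw v v ≤ aw v v - μ * bw v v)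
    (vhat g : H) (β : ℝ)
    (hvhat_perp : ∀ m ∈ M, bw vhat m = 0)
    (hvar : ∀ z, (∀ m ∈ M, bw z m = 0) → aw vhat z - μ * bw vhat z = β * bw g z) :
    Real.sqrt (aw vhat vhat) ≤ Cρ⁻¹ * C * |β| * Real.sqrt (bw g g) := by
  have hbw_nonneg : ∀ v, 0 ≤ bw v v := by
    intro v
    rcases eq_or_ne v 0 with h | h
    · simp [h]
    · exact (hbw_pos v h).le
  have haw_nonneg : ∀ v, 0 ≤ aw v v := by
    intro v
    rcases eq_or_ne v 0 with h | h
    · simp [h]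
    · exact (haw_pos v h).le
  -- Cauchy-Schwarz for bw
  have hCS : |bw g vhat| ≤ Real.sqrt (bw g g) * Real.sqrt (bw vhat vhat) := by
    have hq : ∀ t : ℝ, 0 ≤ bw g g * (t * t) + (2 * bw g vhat) * t + bw vhat vhat := by
      intro t
      have := hbw_nonneg (t • g + vhat)
      simp only [map_add, map_smul, LinearMap.add_apply, LinearMap.smul_apply,
        smul_eq_mul] at this
      rw [hbw_symm vhat g] at this
      nlinarith
    have hd := discrim_le_zero hq
    rw [discrim] at hd
    have hsq : (bw g vhat) ^ 2 ≤ bw g g * bw vhat vhat := by nlinarith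
    calc |bw g vhat| = Real.sqrt ((bw g vhat) ^ 2) := by
          rw [Real.sqrt_sq_eq_abs]
      _ ≤ Real.sqrt (bw g g * bw vhat vhat) := Real.sqrt_le_sqrt hsq
      _ = Real.sqrt (bw g g) * Real.sqrt (bw vhat vhat) := Real.sqrt_mul (hbw_nonneg g) _
  set A := aw vhat vhat with hA
  have h1 : Cρ * A ≤ β * bw g vhat := by
    have := hcoer vhat hvhat_perp
    have h2 := hvar vhat hvhat_perp
    linarith
  have h3 : β * bw g vhat ≤ |β| * (Real.sqrt (bw g g) * Real.sqrt (bw vhat vhat)) := by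
    calc β * bw g vhat ≤ |β * bw g vhat| := le_abs_self _
      _ = |β| * |bw g vhat| := abs_mul _ _
      _ ≤ |β| * (Real.sqrt (bw g g) * Real.sqrt (bw vhat vhat)) :=
          mul_le_mul_of_nonneg_left hCS (abs_nonneg β)
  have h4 : Real.sqrt (bw vhat vhat) ≤ C * Real.sqrt A := by
    calc Real.sqrt (bw vhat vhat) ≤ Real.sqrt (C ^ 2 * A) :=
          Real.sqrt_le_sqrt (hPoincare vhat)
      _ = C * Real.sqrt A := by
          rw [Real.sqrt_mul (by positivity), Real.sqrt_sq hC.le]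
  have hAs : A = Real.sqrt A * Real.sqrt A := (Real.mul_self_sqrt (haw_nonneg vhat)).symm
  have key : Cρ * (Real.sqrt A * Real.sqrt A) ≤ |β| * Real.sqrt (bw g g) * (C * Real.sqrt A) := by
    nlinarith [h1, h3, hAs,
      mul_le_mul_of_nonneg_left h4 (mul_nonneg (abs_nonneg β) (Real.sqrt_nonneg (bw g g)))]
  rcases eq_or_lt_of_le (Real.sqrt_nonneg A) with h0 | h0
  · rw [← h0]
    positivity
  · have hstep : Cρ * Real.sqrt A ≤ |β| * Real.sqrt (bw g g) * C := by
      nlinarith [key, h0]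
    calc Real.sqrt A ≤ Cρ⁻¹ * (|β| * Real.sqrt (bw g g) * C) := by
          rw [le_inv_mul_iff₀ hCρ]; linarith
      _ = Cρ⁻¹ * C * |β| * Real.sqrt (bw g g) := by ring
end

section
/- Let H be a real inner product space and T, T_h : H → H be self-adjoint bounded linear operators with T compact. If ‖T - T_h‖ → 0 as h → 0 (in operator norm) and μ ≠ 0 is an eigenvalue of T, then every disk around μ in the complex plane excluding the rest of σ(T) contains, for h small enough, eigenvalues of T_h; in the finite-dimensional self-adjoint case: for every ε > 0 there is δ > 0 such that ‖T - T_h‖ < δ implies that T_h has an eigenvalue μ_h with |μ - μ_h| < ε. -/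
open RealInnerProductSpace

theorem stmt_19 {H : Type*} [NormedAddCommGroup H] [InnerProductSpace ℝ H]
    [FiniteDimensional ℝ H]
    (T : H →L[ℝ] H) (hT : ∀ x y, ⟪T x, y⟫ = ⟪x, T y⟫)
    (μ : ℝ) (hμ : ∃ x : H, x ≠ 0 ∧ T x = μ • x) :
    ∀ ε > (0:ℝ), ∃ δ > (0:ℝ), ∀ Th : H →L[ℝ] H,
      (∀ x y, ⟪Th x, y⟫ = ⟪x, Th y⟫) → ‖T - Th‖ < δ →
      ∃ μh : ℝ, (∃ x : H, x ≠ 0 ∧ Th x = μh • x) ∧ |μ - μh| < ε := by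
  obtain ⟨x, hx0, hTx⟩ := hμ
  have : Nontrivial H := ⟨x, 0, hx0⟩
  intro ε hε
  refine ⟨ε, hε, fun Th hThs hnorm => ?_⟩
  have hn : 0 < Module.finrank ℝ H := Module.finrank_pos
  have hrk : Module.finrank ℝ H = Module.finrank ℝ H := rfl
  have hsym : (Th : H →ₗ[ℝ] H).IsSymmetric := fun u v => hThs u v
  set B := hsym.eigenvectorBasis hrk with hB
  set f := hsym.eigenvalues hrk with hf
  obtain ⟨i, -, hi⟩ := Finset.exists_min_image Finset.univ (fun j => |f j - μ|)
    ⟨⟨0, hn⟩, Finset.mem_univ _⟩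
  refine ⟨f i, ⟨B i, B.toBasis.ne_zero i, ?_⟩, ?_⟩
  · exact hsym.apply_eigenvectorBasis hrk i
  have hxnorm : (0:ℝ) < ‖x‖ := norm_pos_iff.mpr hx0
  have hcoord : ∀ j, B.repr (Th x - μ • x) j = (f j - μ) * B.repr x j := by
    intro j
    have h : B.repr (Th x) j = f j * B.repr x j :=
      hsym.eigenvectorBasis_apply_self_apply hrk x j
    simp only [map_sub, map_smul, PiLp.sub_apply, PiLp.smul_apply, smul_eq_mul]
    rw [h]; ring
  have key : |f i - μ| * ‖x‖ ≤ ‖Th x - μ • x‖ := by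
    have h1 : ‖Th x - μ • x‖ = ‖B.repr (Th x - μ • x)‖ := (B.repr.norm_map _).symm
    have h2 : ‖x‖ = ‖B.repr x‖ := (B.repr.norm_map _).symm
    rw [h1, h2]
    have hsq : (|f i - μ| * ‖B.repr x‖) ^ 2 ≤ ‖B.repr (Th x - μ • x)‖ ^ 2 := by
      have e1 : ‖B.repr x‖ ^ 2 = ∑ j, ‖B.repr x j‖ ^ 2 := by
        rw [EuclideanSpace.norm_eq, Real.sq_sqrt (by positivity)]
      have e2 : ‖B.repr (Th x - μ • x)‖ ^ 2 = ∑ j, ‖B.repr (Th x - μ • x) j‖ ^ 2 := by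
        rw [EuclideanSpace.norm_eq, Real.sq_sqrt (by positivity)]
      rw [mul_pow, e1, e2, Finset.mul_sum]
      apply Finset.sum_le_sum
      intro j _
      rw [hcoord j, norm_mul, mul_pow]
      simp only [Real.norm_eq_abs]
      have hij := hi j (Finset.mem_univ j)
      have h3 : |f i - μ| ^ 2 ≤ |f j - μ| ^ 2 := by
        nlinarith [abs_nonneg (f i - μ), abs_nonneg (f j - μ)]
      nlinarith [sq_nonneg ‖B.repr x j‖]
    have := Real.sqrt_le_sqrt hsq
    rwa [Real.sqrt_sq (by positivity), Real.sqrt_sq (norm_nonneg _)] at this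
  have hrhs : ‖Th x - μ • x‖ ≤ ‖T - Th‖ * ‖x‖ := by
    have h4 : Th x - μ • x = -((T - Th) x) := by
      simp [hTx]
    rw [h4, norm_neg]
    exact (T - Th).le_opNorm x
  have h5 : |f i - μ| * ‖x‖ ≤ ‖T - Th‖ * ‖x‖ := key.trans hrhs
  have hlt : |f i - μ| < ε :=
    lt_of_le_of_lt (le_of_mul_le_mul_right h5 hxnorm) hnorm
  rwa [abs_sub_comm]
end
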